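/- For each α ∈ {+,−} and each p ≥ 0, there exists a unique derivation D_{α,p} : 𝒜 → 𝒜 commuting with Λ such that, extending D_{α,p} entrywise and coefficientwise to matrices over 𝒜[λ, λ^{-1}] (so that D_{α,p}(λ) = 0), one has D_{α,p}(U(λ)) = Λ(V_{α,p}(λ))·U(λ) − U(λ)·V_{α,p}(λ). Moreover, this derivation acts on the generators by D_{+,p}(r_n) = r_n Λ(a_{+,p}) + Λ(b_{+,p}) + δ_{p,0} r_n, D_{+,p}(q_n) = q_n Λ(a_{+,p}) − Λ(c_{+,p}), D_{−,p}(r_n) = −r_n Λ(a_{−,p}) − Λ(b_{−,p}), D_{−,p}(q_n) = −q_n Λ(a_{−,p}) + Λ(c_{−,p}) + δ_{p,0} q_n. -/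

import Mathlib

noncomputable section

open PowerSeries

open scoped Classical

/-- The polynomial ring `𝒜 = ℚ[q_{n+i}, r_{n+i} : i ∈ ℤ]`; the variable `(true, i)`
is `q_{n+i}` and `(false, i)` is `r_{n+i}`. -/
abbrev A : Type := MvPolynomial (Bool × ℤ) ℚ

/-- The generator `q_{n+i}`. -/
def qv (i : ℤ) : A := MvPolynomial.X (true, i)

/-- The generator `r_{n+i}`. -/
def rv (i : ℤ) : A := MvPolynomial.X (false, i)

/-- The shift operator `Λ`, determined by `Λ(q_{n+i}) = q_{n+i+1}`, `Λ(r_{n+i}) = r_{n+i+1}`. -/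
def Lam : A →+* A :=
  (MvPolynomial.rename (fun bi : Bool × ℤ => (bi.1, bi.2 + 1))).toRingHom

/-- Formal power series over `𝒜` (in `λ`, or in `λ⁻¹`, depending on the context). -/
abbrev S : Type := PowerSeries A

/-- 2×2 matrices over `𝒜[[λ]]` (resp. `𝒜[[λ⁻¹]]`). -/
abbrev M2 : Type := Matrix (Fin 2) (Fin 2) S

/-- `Λ` acting coefficientwise on formal power series. -/
def LamS : S →+* S := PowerSeries.map Lam

/-- The Lax matrix `U(λ) = ((λ, r_n), (λ q_n, 1))`, as a matrix over `𝒜[[λ]]`. -/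
def Umat : M2 :=
  !![PowerSeries.X, PowerSeries.C (rv 0);
     PowerSeries.X * PowerSeries.C (qv 0), 1]

/-- The Lax matrix multiplied by `λ⁻¹`, i.e. `λ⁻¹·U(λ) = ((1, λ⁻¹ r_n), (q_n, λ⁻¹))`,
as a matrix over `𝒜[[λ⁻¹]]` (here `PowerSeries.X` stands for `λ⁻¹`). -/
def UmatInf : M2 :=
  !![1, PowerSeries.X * PowerSeries.C (rv 0);
     PowerSeries.C (qv 0), PowerSeries.X]

/-- `R` is the basic matrix resolvent at `λ = 0`: it is a matrix resolvent
(`Λ(R(λ))·U(λ) = U(λ)·R(λ)`), `R ≡ ((0, r_{n-1}), (0, 1)) mod λ`, `tr R = 1`, `det R = 0`. -/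
def IsResMinus (R : M2) : Prop :=
  R.map (⇑LamS) * Umat = Umat * R ∧
  R.map (⇑(PowerSeries.constantCoeff)) = !![0, rv (-1); 0, 1] ∧
  R 0 0 + R 1 1 = 1 ∧
  R 0 0 * R 1 1 - R 0 1 * R 1 0 = 0

/-- `R` is the basic matrix resolvent at `λ = ∞`: it is a matrix resolvent
(the equation `Λ(R(λ))·U(λ) = U(λ)·R(λ)` is multiplied by `λ⁻¹`, so that it takes place
in matrices over `𝒜[[λ⁻¹]]`), `R ≡ ((1, 0), (q_{n-1}, 0)) mod λ⁻¹`, `tr R = 1`, `det R = 0`. -/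
def IsResPlus (R : M2) : Prop :=
  R.map (⇑LamS) * UmatInf = UmatInf * R ∧
  R.map (⇑(PowerSeries.constantCoeff)) = !![1, 0; qv (-1), 0] ∧
  R 0 0 + R 1 1 = 1 ∧
  R 0 0 * R 1 1 - R 0 1 * R 1 0 = 0

/-- The `p`-th coefficient matrix of a matrix of power series. -/
def coefM (R : M2) (p : ℕ) : Matrix (Fin 2) (Fin 2) A :=
  Matrix.of fun i j => PowerSeries.coeff p (R i j)

/-- The coefficients `a_{α,p}` (with `α = + ↔ true`, `α = - ↔ false`). -/
def aC (Rm Rp : M2) (α : Bool) (p : ℕ) : A :=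
  if α then coefM Rp p 0 0 - (if p = 0 then 1 else 0) else coefM Rm p 0 0

/-- The coefficients `b_{α,p}`. -/
def bC (Rm Rp : M2) (α : Bool) (p : ℕ) : A :=
  if α then coefM Rp p 0 1 else coefM Rm p 0 1

/-- The coefficients `c_{α,p}`. -/
def cC (Rm Rp : M2) (α : Bool) (p : ℕ) : A :=
  if α then coefM Rp p 1 0 else coefM Rm p 1 0

/-- `U(λ) = U0 + λ·U1`: constant part. -/
def U0 : Matrix (Fin 2) (Fin 2) A := !![0, rv 0; 0, 1]

/-- `U(λ) = U0 + λ·U1`: linear part. -/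
def U1 : Matrix (Fin 2) (Fin 2) A := !![1, 0; qv 0, 0]

/-- The coefficient at `λ^m` (`m ∈ ℤ`) of the Laurent-polynomial matrix `V_{α,p}(λ)`,
where `V_{-,p}(λ) = (λ^{-p}R_-(λ))_{≤0} - ((a_{-,p}, b_{-,p}), (0,0))` and
`V_{+,p}(λ) = (λ^{p}R_+(λ))_{≥0} - ((0,0), (c_{+,p}, -a_{+,p}))`. -/
def Vc (Rm Rp : M2) (α : Bool) (p : ℕ) (m : ℤ) : Matrix (Fin 2) (Fin 2) A :=
  if α then
    (if 0 ≤ m ∧ m ≤ (p : ℤ) then coefM Rp ((p : ℤ) - m).toNat else 0)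
      - (if m = 0 then !![0, 0; cC Rm Rp true p, - aC Rm Rp true p] else 0)
  else
    (if -(p : ℤ) ≤ m ∧ m ≤ 0 then coefM Rm (m + (p : ℤ)).toNat else 0)
      - (if m = 0 then !![aC Rm Rp false p, bC Rm Rp false p; 0, 0] else 0)

/-- The coefficient at `λ^m` (`m ∈ ℤ`) of `D(U(λ))`, where `D(λ) = 0`, i.e. of
`((0, D r_n), (λ·D q_n, 0))`. -/
def DUcoef (D : Derivation ℚ A A) (m : ℤ) : Matrix (Fin 2) (Fin 2) A :=
  if m = 0 then !![0, D (rv 0); 0, 0]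
  else if m = 1 then !![0, 0; D (qv 0), 0] else 0

/-- The equation `D(U(λ)) = Λ(V_{α,p}(λ))·U(λ) - U(λ)·V_{α,p}(λ)`, written coefficientwise
in powers of `λ` (both sides are Laurent polynomials in `λ` with matrix coefficients). -/
def DUeq (Rm Rp : M2) (α : Bool) (p : ℕ) (D : Derivation ℚ A A) : Prop :=
  ∀ m : ℤ,
    DUcoef D m =
      (Vc Rm Rp α p m).map Lam * U0 + (Vc Rm Rp α p (m - 1)).map Lam * U1
        - U0 * Vc Rm Rp α p m - U1 * Vc Rm Rp α p (m - 1)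

/-- `D` commutes with the shift `Λ`. -/
def CommutesLam (D : Derivation ℚ A A) : Prop := ∀ f : A, D (Lam f) = Lam (D f)

/-- The action of `D_{α,p}` on the generators `r_n`, `q_n`. -/
def GenEqs (Rm Rp : M2) (α : Bool) (p : ℕ) (D : Derivation ℚ A A) : Prop :=
  if α then
    D (rv 0) = rv 0 * Lam (aC Rm Rp true p) + Lam (bC Rm Rp true p)
        + (if p = 0 then rv 0 else 0) ∧
    D (qv 0) = qv 0 * Lam (aC Rm Rp true p) - Lam (cC Rm Rp true p)
  else
    D (rv 0) = -(rv 0 * Lam (aC Rm Rp false p)) - Lam (bC Rm Rp false p) ∧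
    D (qv 0) = -(qv 0 * Lam (aC Rm Rp false p)) + Lam (cC Rm Rp false p)
        + (if p = 0 then qv 0 else 0)

/-- `D` is the Ablowitz–Ladik derivation `D_{α,p}`: the unique derivation of `𝒜`
commuting with `Λ` and acting on the generators by the prescribed formulas. -/
def IsALDeriv (Rm Rp : M2) (α : Bool) (p : ℕ) (D : Derivation ℚ A A) : Prop :=
  CommutesLam D ∧ GenEqs Rm Rp α p D

/-- The coefficient at `λ^m` (`m ∈ ℤ`) of `R_α(λ)`: `R_-(λ)` has only nonnegative powers,
`R_+(λ)` only nonpositive ones. -/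
def RExt (Rm Rp : M2) (α : Bool) (m : ℤ) : Matrix (Fin 2) (Fin 2) A :=
  if α then (if m ≤ 0 then coefM Rp (-m).toNat else 0)
  else (if 0 ≤ m then coefM Rm m.toNat else 0)

/-- Extension of a double sequence by zero to integer indices. -/
def OmExt (Om : ℕ → ℕ → A) (m k : ℤ) : A :=
  if 0 ≤ m ∧ 0 ≤ k then Om m.toNat k.toNat else 0

/-- The generating identity `tr(R_+(λ)R_+(μ)) - 1 = (λ-μ)² Σ_{p,q≥0} Ω_{p,q} λ^{-p-1} μ^{-q-1}`,
written coefficientwise: `m, k` are the exponents of `λ⁻¹, μ⁻¹`. -/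
def GenPP (Rp : M2) (Om : ℕ → ℕ → A) : Prop :=
  ∀ m k : ℤ,
    (if 0 ≤ m ∧ 0 ≤ k then (coefM Rp m.toNat * coefM Rp k.toNat).trace else 0)
      - (if m = 0 ∧ k = 0 then 1 else 0)
    = OmExt Om (m + 1) (k - 1) - 2 * OmExt Om m k + OmExt Om (m - 1) (k + 1)

/-- The generating identity `tr(R_-(λ)R_-(μ)) - 1 = (λ-μ)² Σ_{p,q≥0} Ω_{p,q} λ^{p-1} μ^{q-1}`,
written coefficientwise: `m, k` are the exponents of `λ, μ`. -/
def GenMM (Rm : M2) (Om : ℕ → ℕ → A) : Prop :=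
  ∀ m k : ℤ,
    (if 0 ≤ m ∧ 0 ≤ k then (coefM Rm m.toNat * coefM Rm k.toNat).trace else 0)
      - (if m = 0 ∧ k = 0 then 1 else 0)
    = OmExt Om (m - 1) (k + 1) - 2 * OmExt Om m k + OmExt Om (m + 1) (k - 1)

/-- The generating identity
`Σ_{p,q≥0} Ω_{p,q} λ^{-p-1} μ^{q-1} = -tr(R_+(λ)R_-(μ))·Σ_{m≥1} m μ^{m-1} λ^{-m-1} + λ^{-2}`
(the expansion of `-tr(R_+(λ)R_-(μ))/(λ-μ)² + 1/λ²` for `|λ| > |μ|`), together with the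
vanishing `Ω_{0,q} = Ω_{p,0} = 0`; `a` is the exponent of `λ⁻¹` and `b` the one of `μ`. -/
def GenPM (Rm Rp : M2) (Om : ℕ → ℕ → A) : Prop :=
  (∀ q, Om 0 q = 0) ∧ (∀ p, Om p 0 = 0) ∧
  ∀ a b : ℤ,
    OmExt Om (a - 1) (b + 1)
      = -(∑ m ∈ Finset.Icc (1 : ℤ) (min (a - 1) (b + 1)),
            m • (coefM Rp (a - m - 1).toNat * coefM Rm (b - m + 1).toNat).trace)
        + (if a = 2 ∧ b = 0 then 1 else 0)

/-- The generating identity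
`Σ_{p,q≥0} Ω_{q,p} λ^{p-1} μ^{-q-1} = -tr(R_-(λ)R_+(μ))·Σ_{m≥1} m λ^{m-1} μ^{-m-1} + μ^{-2}`
(the expansion of `-tr(R_-(λ)R_+(μ))/(λ-μ)² + 1/μ²` for `|μ| > |λ|`);
`c` is the exponent of `λ` and `d` the one of `μ⁻¹`. -/
def GenMP (Rm Rp : M2) (Om : ℕ → ℕ → A) : Prop :=
  ∀ c d : ℤ,
    OmExt Om (d - 1) (c + 1)
      = -(∑ m ∈ Finset.Icc (1 : ℤ) (min (c + 1) (d - 1)),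
            m • (coefM Rm (c - m + 1).toNat * coefM Rp (d - m - 1).toNat).trace)
        + (if c = 0 ∧ d = 2 then 1 else 0)

/-- `Om α β p q` is the full tau-structure family `Ω_{α,p;β,q}`
(with `α = + ↔ true`), as defined by the four generating identities,
where `Ω_{-,p;+,q} := Ω_{+,q;-,p}`. -/
def OmFam (Rm Rp : M2) (Om : Bool → Bool → ℕ → ℕ → A) : Prop :=
  GenPP Rp (Om true true) ∧ GenMM Rm (Om false false) ∧ GenPM Rm Rp (Om true false) ∧
  ∀ p q, Om false true p q = Om true false q p

/-- The multipoint quantities `Ω_{α_1,p_1;…;α_m,p_m}` (`m = k + 2` points), defined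
inductively from the two-point family by applying the derivations `D_{α,p}`. -/
def OmK (Om : Bool → Bool → ℕ → ℕ → A) (D : Bool → ℕ → Derivation ℚ A A) :
    (k : ℕ) → (Fin (k + 2) → Bool) → (Fin (k + 2) → ℕ) → A
  | 0, β, i => Om (β 0) (β 1) (i 0) (i 1)
  | k + 1, β, i =>
      D (β (Fin.last (k + 2))) (i (Fin.last (k + 2)))
        (OmK Om D k (fun j => β j.castSucc) (fun j => i j.castSucc))

/-- Multiplication of a formal series in `λ_1, …, λ_n` with exponents in `ℤⁿ`
(given by its coefficient function `F`) by a polynomial `P`, coefficientwise. -/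
def mulPoly {n : ℕ} (P : MvPolynomial (Fin n) A) (F : (Fin n → ℤ) → A)
    (m : Fin n → ℤ) : A :=
  ∑ d ∈ P.support, P.coeff d * F (fun j => m j - d j)

/-- The Vandermonde-type polynomial `∏_{i<j} (λ_i - λ_j)`. -/
def vandP (n : ℕ) : MvPolynomial (Fin n) A :=
  ∏ p ∈ Finset.univ.filter (fun p : Fin n × Fin n => p.1 < p.2),
    (MvPolynomial.X p.1 - MvPolynomial.X p.2)

/-- `i` and `j` are cyclically adjacent for `σ`, i.e. `{i,j} = {σ(t), σ(t+1)}` for some `t`. -/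
def cycAdj {n : ℕ} [NeZero n] (σ : Equiv.Perm (Fin n)) (i j : Fin n) : Prop :=
  ∃ t : Fin n, (σ t = i ∧ σ (t + 1) = j) ∨ (σ t = j ∧ σ (t + 1) = i)

/-- The polynomial `∏_{i<j} (λ_i - λ_j) / ∏_t (λ_{σ(t)} - λ_{σ(t+1)})`, up to the sign
`permSign σ`: the product of `(λ_i - λ_j)` over ordered non-cyclically-adjacent pairs. -/
def Qpoly {n : ℕ} [NeZero n] (σ : Equiv.Perm (Fin n)) : MvPolynomial (Fin n) A :=
  ∏ p ∈ Finset.univ.filter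
      (fun p : Fin n × Fin n => p.1 < p.2 ∧ ¬ cycAdj σ p.1 p.2),
    (MvPolynomial.X p.1 - MvPolynomial.X p.2)

/-- The sign relating `∏_t (λ_{σ(t)} - λ_{σ(t+1)})` with the corresponding product over
ordered pairs. -/
def permSign {n : ℕ} [NeZero n] (σ : Equiv.Perm (Fin n)) : A :=
  ∏ t : Fin n, (if σ (t + 1) < σ t then (-1 : A) else 1)

/-- The coefficient function of `tr(R_{α_{σ(1)}}(λ_{σ(1)}) ⋯ R_{α_{σ(n)}}(λ_{σ(n)}))`. -/
def Gfun (Rm Rp : M2) {n : ℕ} (β : Fin n → Bool) (σ : Equiv.Perm (Fin n))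
    (m : Fin n → ℤ) : A :=
  (List.ofFn (fun j : Fin n => RExt Rm Rp (β (σ j)) (m (σ j)))).prod.trace

/-- The coefficient function of the generating series
`Σ_{i_1,…,i_m ≥ 0} Ω_{α_1,i_1;…;α_m,i_m} / (λ_1^{α_1 i_1 + 1} ⋯ λ_m^{α_m i_m + 1})`. -/
def lhsF (Om : Bool → Bool → ℕ → ℕ → A) (D : Bool → ℕ → Derivation ℚ A A)
    {k : ℕ} (β : Fin (k + 2) → Bool) (m : Fin (k + 2) → ℤ) : A :=
  if (∀ j, if β j then m j ≤ -1 else -1 ≤ m j) then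
    OmK Om D k β (fun j => if β j then (-(m j) - 1).toNat else (m j + 1).toNat)
  else 0

namespace ALwork

/-- nonneg extension of matrix coefficients to integer indices -/
def e0 (R : M2) (s : ℤ) : Matrix (Fin 2) (Fin 2) A :=
  if 0 ≤ s then coefM R s.toNat else 0

lemma e0_natCast (R : M2) (n : ℕ) : e0 R (n : ℤ) = coefM R n := by
  simp [e0]

lemma e0_neg (R : M2) {s : ℤ} (h : s < 0) : e0 R s = 0 := by
  simp [e0, not_le.2 h]

lemma coefM_map_LamS (R : M2) (n : ℕ) :
    coefM (R.map (⇑LamS)) n = (coefM R n).map (⇑Lam) := by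
  ext i j
  simp [coefM, LamS, Matrix.map_apply, PowerSeries.coeff_map]

lemma Umat_eq :
    Umat = U0.map (⇑(PowerSeries.C)) + (PowerSeries.X : S) • U1.map (⇑(PowerSeries.C)) := by
  ext i j
  fin_cases i <;> fin_cases j <;>
    simp [Umat, U0, U1, smul_eq_mul, mul_comm]

lemma UmatInf_eq :
    UmatInf = U1.map (⇑(PowerSeries.C)) + (PowerSeries.X : S) • U0.map (⇑(PowerSeries.C)) := by
  ext i j
  fin_cases i <;> fin_cases j <;>
    simp [UmatInf, U0, U1, smul_eq_mul, mul_comm]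

lemma coefM_add (M N : M2) (n : ℕ) : coefM (M + N) n = coefM M n + coefM N n := by
  ext i j
  simp [coefM]

lemma coefM_Xsmul_zero (M : M2) : coefM ((PowerSeries.X : S) • M) 0 = 0 := by
  ext i j
  simp [coefM, smul_eq_mul, PowerSeries.coeff_zero_X_mul]

lemma coefM_Xsmul_succ (M : M2) (n : ℕ) :
    coefM ((PowerSeries.X : S) • M) (n + 1) = coefM M n := by
  ext i j
  simp [coefM, smul_eq_mul, PowerSeries.coeff_succ_X_mul]

lemma coefM_mul_mapC (R : M2) (N : Matrix (Fin 2) (Fin 2) A) (n : ℕ) :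
    coefM (R * N.map (⇑(PowerSeries.C))) n = coefM R n * N := by
  ext i j
  simp [coefM, Matrix.mul_apply, Fin.sum_univ_two, Matrix.map_apply,
    PowerSeries.coeff_mul_C]

lemma coefM_mapC_mul (R : M2) (N : Matrix (Fin 2) (Fin 2) A) (n : ℕ) :
    coefM (N.map (⇑(PowerSeries.C)) * R) n = N * coefM R n := by
  ext i j
  simp [coefM, Matrix.mul_apply, Fin.sum_univ_two, Matrix.map_apply,
    PowerSeries.coeff_C_mul]

end ALwork
namespace ALwork

lemma relM_nat (R : M2) (h : R.map (⇑LamS) * Umat = Umat * R) (n : ℕ) :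
    coefM (R.map (⇑LamS)) n * U0
      + (if n = 0 then 0 else coefM (R.map (⇑LamS)) (n - 1) * U1)
    = U0 * coefM R n + (if n = 0 then 0 else U1 * coefM R (n - 1)) := by
  have h2 := congrArg (fun M : M2 => coefM M n) h
  simp only [Umat_eq, mul_add, add_mul, Matrix.mul_smul, Matrix.smul_mul] at h2
  rcases n with _ | n <;>
    simpa [coefM_add, coefM_Xsmul_zero, coefM_Xsmul_succ, coefM_mul_mapC,
      coefM_mapC_mul] using h2

lemma relP_nat (R : M2) (h : R.map (⇑LamS) * UmatInf = UmatInf * R) (n : ℕ) :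
    coefM (R.map (⇑LamS)) n * U1
      + (if n = 0 then 0 else coefM (R.map (⇑LamS)) (n - 1) * U0)
    = U1 * coefM R n + (if n = 0 then 0 else U0 * coefM R (n - 1)) := by
  have h2 := congrArg (fun M : M2 => coefM M n) h
  simp only [UmatInf_eq, mul_add, add_mul, Matrix.mul_smul, Matrix.smul_mul] at h2
  rcases n with _ | n <;>
    simpa [coefM_add, coefM_Xsmul_zero, coefM_Xsmul_succ, coefM_mul_mapC,
      coefM_mapC_mul] using h2

lemma relMz (R : M2) (h : R.map (⇑LamS) * Umat = Umat * R) (s : ℤ) :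
    (e0 R s).map (⇑Lam) * U0 + (e0 R (s - 1)).map (⇑Lam) * U1
      = U0 * e0 R s + U1 * e0 R (s - 1) := by
  have hz : ((0 : Matrix (Fin 2) (Fin 2) A)).map (⇑Lam) = 0 :=
    Matrix.map_zero _ (map_zero Lam)
  rcases lt_trichotomy s 0 with hs | hs | hs
  · rw [e0_neg R hs, e0_neg R (by omega), hz]
    simp
  · subst hs
    rw [e0_neg R (by omega : (0:ℤ) - 1 < 0), hz]
    have := relM_nat R h 0
    simp only [if_pos rfl] at this
    have h0 : e0 R 0 = coefM R 0 := by simp [e0]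
    rw [coefM_map_LamS] at this
    simpa [h0] using this
  · obtain ⟨n, rfl⟩ : ∃ n : ℕ, s = ((n : ℤ) + 1) := ⟨(s - 1).toNat, by omega⟩
    have h1 : e0 R ((n : ℤ) + 1) = coefM R (n + 1) := by
      rw [show ((n : ℤ) + 1) = ((n + 1 : ℕ) : ℤ) by push_cast; ring, e0_natCast]
    have h2 : e0 R ((n : ℤ) + 1 - 1) = coefM R n := by
      rw [show ((n : ℤ) + 1 - 1) = ((n : ℕ) : ℤ) by ring, e0_natCast]
    have := relM_nat R h (n + 1)
    simp only [Nat.succ_ne_zero, if_neg, Nat.add_sub_cancel, coefM_map_LamS] at this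
    rw [h1, h2]
    simpa using this

lemma relPz (R : M2) (h : R.map (⇑LamS) * UmatInf = UmatInf * R) (s : ℤ) :
    (e0 R s).map (⇑Lam) * U1 + (e0 R (s - 1)).map (⇑Lam) * U0
      = U1 * e0 R s + U0 * e0 R (s - 1) := by
  have hz : ((0 : Matrix (Fin 2) (Fin 2) A)).map (⇑Lam) = 0 :=
    Matrix.map_zero _ (map_zero Lam)
  rcases lt_trichotomy s 0 with hs | hs | hs
  · rw [e0_neg R hs, e0_neg R (by omega), hz]
    simp
  · subst hs
    rw [e0_neg R (by omega : (0:ℤ) - 1 < 0), hz]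
    have := relP_nat R h 0
    simp only [if_pos rfl] at this
    have h0 : e0 R 0 = coefM R 0 := by simp [e0]
    rw [coefM_map_LamS] at this
    simpa [h0] using this
  · obtain ⟨n, rfl⟩ : ∃ n : ℕ, s = ((n : ℤ) + 1) := ⟨(s - 1).toNat, by omega⟩
    have h1 : e0 R ((n : ℤ) + 1) = coefM R (n + 1) := by
      rw [show ((n : ℤ) + 1) = ((n + 1 : ℕ) : ℤ) by push_cast; ring, e0_natCast]
    have h2 : e0 R ((n : ℤ) + 1 - 1) = coefM R n := by
      rw [show ((n : ℤ) + 1 - 1) = ((n : ℕ) : ℤ) by ring, e0_natCast]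
    have := relP_nat R h (n + 1)
    simp only [Nat.succ_ne_zero, if_neg, Nat.add_sub_cancel, coefM_map_LamS] at this
    rw [h1, h2]
    simpa using this

lemma trace_coeff (R : M2) (h : R 0 0 + R 1 1 = 1) (n : ℕ) :
    PowerSeries.coeff n (R 0 0) + PowerSeries.coeff n (R 1 1)
      = if n = 0 then 1 else 0 := by
  have := congrArg (PowerSeries.coeff n) h
  simpa [PowerSeries.coeff_one] using this

end ALwork
namespace ALwork

def Em (Rm Rp : M2) (p : ℕ) : Matrix (Fin 2) (Fin 2) A :=
  !![aC Rm Rp false p, bC Rm Rp false p; 0, 0]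

def Ep (Rm Rp : M2) (p : ℕ) : Matrix (Fin 2) (Fin 2) A :=
  !![0, 0; cC Rm Rp true p, - aC Rm Rp true p]

def FrA (Rm Rp : M2) (α : Bool) (p : ℕ) : A :=
  if α then rv 0 * Lam (aC Rm Rp true p) + Lam (bC Rm Rp true p)
    + (if p = 0 then rv 0 else 0)
  else -(rv 0 * Lam (aC Rm Rp false p)) - Lam (bC Rm Rp false p)

def FqA (Rm Rp : M2) (α : Bool) (p : ℕ) : A :=
  if α then qv 0 * Lam (aC Rm Rp true p) - Lam (cC Rm Rp true p)
  else -(qv 0 * Lam (aC Rm Rp false p)) + Lam (cC Rm Rp false p)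
    + (if p = 0 then qv 0 else 0)

lemma Vc_false (Rm Rp : M2) (p : ℕ) (m : ℤ) :
    Vc Rm Rp false p m
      = (if m ≤ 0 then e0 Rm (m + p) else 0) - (if m = 0 then Em Rm Rp p else 0) := by
  have h : Vc Rm Rp false p m
      = (if -(p:ℤ) ≤ m ∧ m ≤ 0 then coefM Rm (m + (p:ℤ)).toNat else 0)
      - (if m = 0 then !![aC Rm Rp false p, bC Rm Rp false p; 0, 0] else 0) := by
    simp [Vc]
  rw [h]
  congr 1
  by_cases h1 : m ≤ 0
  · by_cases h2 : -(p:ℤ) ≤ m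
    · rw [if_pos ⟨h2, h1⟩, if_pos h1, e0, if_pos (by omega)]
    · rw [if_neg (by tauto), if_pos h1, e0, if_neg (by omega)]
  · rw [if_neg (by tauto), if_neg h1]

lemma Vc_true (Rm Rp : M2) (p : ℕ) (m : ℤ) :
    Vc Rm Rp true p m
      = (if 0 ≤ m then e0 Rp ((p:ℤ) - m) else 0) - (if m = 0 then Ep Rm Rp p else 0) := by
  have h : Vc Rm Rp true p m
      = (if 0 ≤ m ∧ m ≤ (p:ℤ) then coefM Rp ((p:ℤ) - m).toNat else 0)
      - (if m = 0 then !![0, 0; cC Rm Rp true p, - aC Rm Rp true p] else 0) := by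
    simp [Vc]
  rw [h]
  congr 1
  by_cases h1 : (0:ℤ) ≤ m
  · by_cases h2 : m ≤ (p:ℤ)
    · rw [if_pos ⟨h1, h2⟩, if_pos h1, e0, if_pos (by omega)]
    · rw [if_neg (by tauto), if_pos h1, e0, if_neg (by omega)]
  · rw [if_neg (by tauto), if_neg h1]

end ALwork
namespace ALwork

set_option maxHeartbeats 2000000 in
lemma key (Rm Rp : M2) (hm : IsResMinus Rm) (hp : IsResPlus Rp) (α : Bool) (p : ℕ)
    (m : ℤ) :
    (Vc Rm Rp α p m).map (⇑Lam) * U0 + (Vc Rm Rp α p (m - 1)).map (⇑Lam) * U1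
      - U0 * Vc Rm Rp α p m - U1 * Vc Rm Rp α p (m - 1)
    = if m = 0 then !![0, FrA Rm Rp α p; 0, 0]
      else if m = 1 then !![0, 0; FqA Rm Rp α p, 0] else 0 := by
  have htr := trace_coeff Rm hm.2.2.1 p
  have htrp := trace_coeff Rp hp.2.2.1 p
  cases α
  · -- α = false
    rw [Vc_false, Vc_false]
    rcases lt_trichotomy m 0 with hm0 | rfl | hm1
    · -- m ≤ -1 : pure resolvent relation
      rw [if_neg (by omega : ¬ m = 0), if_neg (by omega : ¬ m = 1),
        if_pos (le_of_lt hm0), if_pos (by omega : m - 1 ≤ 0),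
        if_neg (by omega : ¬ m = 0), if_neg (by omega : ¬ m - 1 = 0)]
      have hrel := relMz Rm hm.1 (m + p)
      rw [show m + (p:ℤ) - 1 = m - 1 + p by ring] at hrel
      simp only [sub_zero]
      rw [sub_sub, sub_eq_zero]
      exact hrel
    · -- m = 0
      rw [if_pos rfl, if_pos (by omega : (0:ℤ) ≤ 0), if_pos rfl,
        if_pos (by omega : (0:ℤ) - 1 ≤ 0), if_neg (by omega : ¬ (0:ℤ) - 1 = 0)]
      rw [show (0:ℤ) + (p:ℕ) = ((p:ℕ):ℤ) by ring, show (0:ℤ) - 1 + (p:ℕ) = ((p:ℕ):ℤ) - 1 by ring,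
        e0_natCast]
      have hrel := relMz Rm hm.1 p
      rw [e0_natCast] at hrel
      have hms : (coefM Rm p - Em Rm Rp p).map (⇑Lam)
          = (coefM Rm p).map (⇑Lam) - (Em Rm Rp p).map (⇑Lam) :=
        Matrix.map_sub _ (map_sub Lam) _ _
      have hE : U0 * Em Rm Rp p - (Em Rm Rp p).map (⇑Lam) * U0
          = !![0, FrA Rm Rp false p; 0, 0] := by
        ext i j : 1
        fin_cases i <;> fin_cases j <;>
          simp [Em, FrA, aC, bC, U0, Matrix.mul_apply, Fin.sum_univ_two] <;> ring
      have gen : ∀ (X Y Z W P Q T : Matrix (Fin 2) (Fin 2) A),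
          X + Y = Z + W → Q - P = T → X - P + Y - (Z - Q) - W = T := by
        intro X Y Z W P Q T h1 h2
        have h3 : X - P + Y - (Z - Q) - W = (X + Y) - (Z + W) + (Q - P) := by abel
        rw [h3, h1, sub_self, zero_add, h2]
      simp only [sub_zero, hms, sub_mul, mul_sub]
      exact gen _ _ _ _ _ _ _ hrel hE
    · -- m ≥ 1
      by_cases hm2 : m = 1
      · subst hm2
        rw [if_neg (by omega : ¬ (1:ℤ) = 0), if_pos rfl,
          if_neg (by omega : ¬ (1:ℤ) ≤ 0), if_neg (by omega : ¬ (1:ℤ) = 0),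
          if_pos (by omega : (1:ℤ) - 1 ≤ 0), if_pos (by omega : (1:ℤ) - 1 = 0)]
        rw [show (1:ℤ) - 1 + (p:ℕ) = ((p:ℕ):ℤ) by ring, e0_natCast]
        obtain ⟨a00, a01, a10, a11, ha⟩ :
            ∃ a00 a01 a10 a11, coefM Rm p = !![a00, a01; a10, a11] :=
          ⟨_, _, _, _, by ext i j : 1; fin_cases i <;> fin_cases j <;> rfl⟩
        have e00 : coefM Rm p 0 0 = a00 := by rw [ha]; simp
        have e01 : coefM Rm p 0 1 = a01 := by rw [ha]; simp
        have e10 : coefM Rm p 1 0 = a10 := by rw [ha]; simp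
        have e11 : coefM Rm p 1 1 = a11 := by rw [ha]; simp
        have htr2 : a00 + a11 = (if p = 0 then 1 else 0 : A) := by
          rw [← e00, ← e11]; exact htr
        have htrL := congrArg (⇑Lam) htr2
        simp only [map_add, apply_ite (⇑Lam), map_one, map_zero] at htrL
        have hFq : FqA Rm Rp false p
            = -(qv 0 * Lam a00) + Lam a10 + qv 0 * (if p = 0 then 1 else 0) := by
          simp only [FqA, aC, cC, Bool.false_eq_true, if_false, e00, e10]
          split_ifs <;> ring
        have hEm : Em Rm Rp p = !![a00, a01; 0, 0] := by
          simp only [Em, aC, bC, Bool.false_eq_true, if_false, e00, e01]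
        rw [hFq, hEm, ha]
        ext i j : 1
        fin_cases i <;> fin_cases j <;>
          simp [U0, U1, Matrix.mul_apply, Fin.sum_univ_two, map_sub, -mul_ite, -ite_mul]
        all_goals linear_combination qv 0 * htrL
      · -- m ≥ 2
        rw [if_neg (by omega : ¬ m = 0), if_neg hm2,
          if_neg (by omega : ¬ m ≤ 0), if_neg (by omega : ¬ m = 0),
          if_neg (by omega : ¬ m - 1 ≤ 0), if_neg (by omega : ¬ m - 1 = 0)]
        simp
  · -- α = true
    rw [Vc_true, Vc_true]
    rcases lt_trichotomy m 0 with hm0 | rfl | hm1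
    · -- m ≤ -1 : everything vanishes
      rw [if_neg (by omega : ¬ m = 0), if_neg (by omega : ¬ m = 1),
        if_neg (by omega : ¬ (0:ℤ) ≤ m), if_neg (by omega : ¬ m = 0),
        if_neg (by omega : ¬ (0:ℤ) ≤ m - 1), if_neg (by omega : ¬ m - 1 = 0)]
      simp
    · -- m = 0 : trace relation only
      rw [if_pos rfl, if_pos rfl, if_pos (le_refl (0:ℤ)),
        if_neg (by omega : ¬ (0:ℤ) ≤ 0 - 1), if_neg (by omega : ¬ (0:ℤ) - 1 = 0)]
      rw [show ((p:ℕ):ℤ) - 0 = ((p:ℕ):ℤ) by ring, e0_natCast]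
      obtain ⟨a00, a01, a10, a11, ha⟩ :
          ∃ a00 a01 a10 a11, coefM Rp p = !![a00, a01; a10, a11] :=
        ⟨_, _, _, _, by ext i j : 1; fin_cases i <;> fin_cases j <;> rfl⟩
      have e00 : coefM Rp p 0 0 = a00 := by rw [ha]; simp
      have e01 : coefM Rp p 0 1 = a01 := by rw [ha]; simp
      have e10 : coefM Rp p 1 0 = a10 := by rw [ha]; simp
      have e11 : coefM Rp p 1 1 = a11 := by rw [ha]; simp
      have htr2 : a00 + a11 = (if p = 0 then 1 else 0 : A) := by
        rw [← e00, ← e11]; exact htrp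
      have htrL := congrArg (⇑Lam) htr2
      simp only [map_add, apply_ite (⇑Lam), map_one, map_zero] at htrL
      have hFr : FrA Rm Rp true p = rv 0 * Lam a00 + Lam a01 := by
        simp only [FrA, aC, bC, if_true, e00, e01, map_sub, apply_ite (⇑Lam),
          map_one, map_zero]
        split_ifs <;> ring
      have hEp : Ep Rm Rp p = !![0, 0; a10, -(a00 - (if p = 0 then 1 else 0))] := by
        simp only [Ep, aC, cC, if_true, e00, e10]
      rw [hFr, hEp, ha]
      ext i j : 1
      fin_cases i <;> fin_cases j <;>
        simp [U0, U1, Matrix.mul_apply, Fin.sum_univ_two, map_sub, map_add, map_neg,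
          apply_ite (⇑Lam), map_one, map_zero, -mul_ite, -ite_mul]
      all_goals first
        | linear_combination rv 0 * htr2
        | linear_combination (-(rv 0)) * htr2
        | linear_combination htrL - htr2
        | linear_combination htr2 - htrL
    · -- m ≥ 1
      by_cases hm2 : m = 1
      · subst hm2
        rw [if_neg (by omega : ¬ (1:ℤ) = 0), if_pos rfl,
          if_pos (by omega : (0:ℤ) ≤ 1), if_neg (by omega : ¬ (1:ℤ) = 0),
          if_pos (by omega : (0:ℤ) ≤ 1 - 1), if_pos (by omega : (1:ℤ) - 1 = 0)]
        rw [show ((p:ℕ):ℤ) - (1 - 1) = ((p:ℕ):ℤ) by ring, e0_natCast]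
        have hrel := relPz Rp hp.1 p
        rw [e0_natCast] at hrel
        have hms : (coefM Rp p - Ep Rm Rp p).map (⇑Lam)
            = (coefM Rp p).map (⇑Lam) - (Ep Rm Rp p).map (⇑Lam) :=
          Matrix.map_sub _ (map_sub Lam) _ _
        have hEgen : ∀ (x c : A),
            U1 * !![(0:A), 0; c, -x] - (!![(0:A), 0; c, -x]).map (⇑Lam) * U1
              = !![0, 0; qv 0 * Lam x - Lam c, 0] := by
          intro x c
          ext i j : 1
          fin_cases i <;> fin_cases j <;>
            simp [U1, Matrix.mul_apply, Fin.sum_univ_two, map_neg] <;> ring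
        have hEp : Ep Rm Rp p = !![(0:A), 0; cC Rm Rp true p, -(aC Rm Rp true p)] := rfl
        have hFqe : FqA Rm Rp true p
            = qv 0 * Lam (aC Rm Rp true p) - Lam (cC Rm Rp true p) := by
          simp [FqA]
        have hE : U1 * Ep Rm Rp p - (Ep Rm Rp p).map (⇑Lam) * U1
            = !![0, 0; FqA Rm Rp true p, 0] := by
          rw [hEp, hFqe]
          exact hEgen _ _
        have gen2 : ∀ (X Y Z W P Q T : Matrix (Fin 2) (Fin 2) A),
            X + Y = Z + W → Q - P = T → Y + (X - P) - W - (Z - Q) = T := by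
          intro X Y Z W P Q T h1 h2
          have h3 : Y + (X - P) - W - (Z - Q) = (X + Y) - (Z + W) + (Q - P) := by abel
          rw [h3, h1, sub_self, zero_add, h2]
        simp only [sub_zero, hms, sub_mul, mul_sub]
        exact gen2 _ _ _ _ _ _ _ hrel hE
      · -- m ≥ 2
        rw [if_neg (by omega : ¬ m = 0), if_neg hm2,
          if_pos (by omega : (0:ℤ) ≤ m), if_neg (by omega : ¬ m = 0),
          if_pos (by omega : (0:ℤ) ≤ m - 1), if_neg (by omega : ¬ m - 1 = 0)]
        simp only [sub_zero]
        have hrel := relPz Rp hp.1 ((p:ℤ) - m + 1)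
        rw [show (p:ℤ) - m + 1 - 1 = (p:ℤ) - m by ring] at hrel
        rw [show (p:ℤ) - (m - 1) = (p:ℤ) - m + 1 by ring]
        have gen3 : ∀ (X Y Z W : Matrix (Fin 2) (Fin 2) A),
            X + Y = Z + W → Y + X - (W + Z) = 0 := by
          intro X Y Z W h1
          have h3 : Y + X - (W + Z) = (X + Y) - (Z + W) := by abel
          rw [h3, h1, sub_self]
        rw [sub_sub]
        exact gen3 _ _ _ _ hrel


end ALwork
namespace ALwork

/-- integer shift -/
def LamZ (i : ℤ) : A →+* A :=
  (MvPolynomial.rename (fun bi : Bool × ℤ => (bi.1, bi.2 + i))).toRingHom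

lemma LamZ_zero (f : A) : LamZ 0 f = f := by
  show (MvPolynomial.rename fun bi : Bool × ℤ => (bi.1, bi.2 + (0:ℤ))) f = f
  rw [show (fun bi : Bool × ℤ => (bi.1, bi.2 + (0:ℤ))) = id from by funext bi; simp]
  exact MvPolynomial.rename_id_apply f

lemma Lam_LamZ (i : ℤ) (f : A) : Lam (LamZ i f) = LamZ (i + 1) f := by
  show (MvPolynomial.rename fun bi : Bool × ℤ => (bi.1, bi.2 + 1))
      ((MvPolynomial.rename fun bi : Bool × ℤ => (bi.1, bi.2 + i)) f)
    = (MvPolynomial.rename fun bi : Bool × ℤ => (bi.1, bi.2 + (i + 1))) f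
  rw [MvPolynomial.rename_rename]
  rw [show ((fun bi : Bool × ℤ => (bi.1, bi.2 + 1)) ∘ fun bi : Bool × ℤ => (bi.1, bi.2 + i))
      = (fun bi : Bool × ℤ => (bi.1, bi.2 + (i + 1))) from by
    funext bi; simp [Function.comp, add_assoc]]

lemma Lam_X (b : Bool) (i : ℤ) :
    Lam (MvPolynomial.X (b, i)) = MvPolynomial.X (b, i + 1) := by
  simp [Lam, MvPolynomial.rename_X]

lemma Lam_injective : Function.Injective (⇑Lam) := by
  have : Function.Injective (fun bi : Bool × ℤ => (bi.1, bi.2 + 1)) := by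
    intro x y h
    simp only [Prod.mk.injEq] at h
    exact Prod.ext h.1 (by omega)
  exact MvPolynomial.rename_injective _ this

/-- values of the derivation on the generators -/
def gen (Rm Rp : M2) (α : Bool) (p : ℕ) : Bool × ℤ → A :=
  fun bi => LamZ bi.2 (if bi.1 then FqA Rm Rp α p else FrA Rm Rp α p)

def D0 (Rm Rp : M2) (α : Bool) (p : ℕ) : Derivation ℚ A A :=
  MvPolynomial.mkDerivation ℚ (gen Rm Rp α p)

lemma D0_X (Rm Rp : M2) (α : Bool) (p : ℕ) (b : Bool) (i : ℤ) :
    D0 Rm Rp α p (MvPolynomial.X (b, i))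
      = LamZ i (if b then FqA Rm Rp α p else FrA Rm Rp α p) :=
  MvPolynomial.mkDerivation_X _ _ _

lemma D0_rv (Rm Rp : M2) (α : Bool) (p : ℕ) :
    D0 Rm Rp α p (rv 0) = FrA Rm Rp α p := by
  rw [rv, D0_X]
  simp [LamZ_zero]

lemma D0_qv (Rm Rp : M2) (α : Bool) (p : ℕ) :
    D0 Rm Rp α p (qv 0) = FqA Rm Rp α p := by
  rw [qv, D0_X]
  simp [LamZ_zero]

lemma D0_comm (Rm Rp : M2) (α : Bool) (p : ℕ) : CommutesLam (D0 Rm Rp α p) := by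
  intro f
  induction f using MvPolynomial.induction_on with
  | C a =>
      rw [show Lam (MvPolynomial.C a) = MvPolynomial.C a from MvPolynomial.rename_C _ a]
      rw [show (MvPolynomial.C a : A) = algebraMap ℚ A a from rfl]
      rw [Derivation.map_algebraMap]
      simp
  | add f g hf hg => simp [map_add, hf, hg]
  | mul_X f bi hf =>
      rcases bi with ⟨b, i⟩
      rw [map_mul, Derivation.leibniz, Derivation.leibniz]
      rw [Lam_X, D0_X, D0_X, smul_eq_mul, smul_eq_mul, smul_eq_mul, smul_eq_mul]
      rw [map_add, map_mul, map_mul, Lam_X, hf, Lam_LamZ]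

lemma deriv_eq (D D' : Derivation ℚ A A) (hD : CommutesLam D) (hD' : CommutesLam D')
    (hr : D (rv 0) = D' (rv 0)) (hq : D (qv 0) = D' (qv 0)) : D = D' := by
  apply MvPolynomial.derivation_ext
  rintro ⟨b, i⟩
  induction i using Int.induction_on with
  | zero => cases b
            · exact hr
            · exact hq
  | succ n ih =>
      have hX : (MvPolynomial.X (b, (n:ℤ) + 1) : A) = Lam (MvPolynomial.X (b, (n:ℤ))) :=
        (Lam_X b n).symm
      rw [hX, hD, hD', ih]
  | pred n ih =>
      have hX : Lam (MvPolynomial.X (b, -(n:ℤ) - 1) : A) = MvPolynomial.X (b, -(n:ℤ)) := by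
        rw [Lam_X]
        norm_num
      apply Lam_injective
      rw [← hD, ← hD', hX, ih]

end ALwork
/-- For each `α ∈ {+,-}` and `p ≥ 0` there is a unique derivation of `𝒜` commuting with `Λ`
and satisfying `D(U(λ)) = Λ(V_{α,p}(λ))·U(λ) - U(λ)·V_{α,p}(λ)`; moreover any such derivation
acts on the generators `q_n, r_n` by the explicit Ablowitz–Ladik formulas. -/
theorem exists_unique_AL_derivation (Rm Rp : M2)
    (hm : IsResMinus Rm) (hp : IsResPlus Rp) (α : Bool) (p : ℕ) :
    (∃! D : Derivation ℚ A A, CommutesLam D ∧ DUeq Rm Rp α p D) ∧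
    (∀ D : Derivation ℚ A A, CommutesLam D → DUeq Rm Rp α p D →
      GenEqs Rm Rp α p D) := by
  classical
  have hkey := ALwork.key Rm Rp hm hp α p
  have hD0U : DUeq Rm Rp α p (ALwork.D0 Rm Rp α p) := by
    intro m
    rw [hkey m]
    unfold DUcoef
    split_ifs with h1 h2
    · rw [ALwork.D0_rv]
    · rw [ALwork.D0_qv]
    · rfl
  have hgen : ∀ D : Derivation ℚ A A, DUeq Rm Rp α p D →
      D (rv 0) = ALwork.FrA Rm Rp α p ∧ D (qv 0) = ALwork.FqA Rm Rp α p := by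
    intro D hDU
    have h0 := (hDU 0).trans (hkey 0)
    have h1 := (hDU 1).trans (hkey 1)
    unfold DUcoef at h0 h1
    norm_num at h0 h1
    constructor
    · have h2 := h0
      simpa using h2
    · have h2 := h1
      simpa using h2
  refine ⟨⟨ALwork.D0 Rm Rp α p, ⟨ALwork.D0_comm Rm Rp α p, hD0U⟩, ?_⟩, ?_⟩
  · rintro D ⟨hDC, hDU⟩
    obtain ⟨h1, h2⟩ := hgen D hDU
    exact ALwork.deriv_eq D _ hDC (ALwork.D0_comm Rm Rp α p)
      (by rw [h1, ALwork.D0_rv]) (by rw [h2, ALwork.D0_qv])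
  · intro D hC hDU
    obtain ⟨h1, h2⟩ := hgen D hDU
    cases α
    · simp only [ALwork.FrA, ALwork.FqA, Bool.false_eq_true, if_false] at h1 h2
      simp only [GenEqs, Bool.false_eq_true, if_false]
      exact ⟨h1, h2⟩
    · simp only [ALwork.FrA, ALwork.FqA, if_true] at h1 h2
      simp only [GenEqs, if_true]
      exact ⟨h1, h2⟩
end
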